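/- Let C be a finite set and ρ_{cc'} ≥ 0 for c, c' ∈ C. Suppose the system y_c = Σ_{c'∈C} ρ_{cc'}·exp(y_{c'}) has a real-valued solution (y_c). Then the vector x with x_c = exp(y_c) is strictly positive and satisfies Σ_{c'∈C} ρ_{cc'}·x_{c'} ≤ x_c/e for every c ∈ C; consequently every complex eigenvalue of the matrix (ρ_{cc'})_{c,c'∈C} has modulus at most 1/e. In particular the Perron–Frobenius eigenvalue ρ of this nonnegative matrix satisfies ρ ≤ 1/e. -/

import Mathlib

/-- Let `C` be finite, `ρ c c' ≥ 0`, and suppose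
`y c = Σ_{c'} ρ c c' * exp (y c')` has a real solution `y`. Then
`x c = exp (y c)` is strictly positive and `Σ_{c'} ρ c c' * x c' ≤ x c / e`
for every `c`; consequently every complex eigenvalue of `(ρ c c')` has modulus
at most `1/e` (in particular the Perron–Frobenius eigenvalue is `≤ 1/e`). -/
theorem stmt_18 {C : Type*} [Fintype C] [DecidableEq C] (ρ : C → C → ℝ)
    (hρ : ∀ c c', 0 ≤ ρ c c')
    (y : C → ℝ) (hy : ∀ c, y c = ∑ c', ρ c c' * Real.exp (y c')) :
    (∀ c, 0 < Real.exp (y c)) ∧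
      (∀ c, (∑ c', ρ c c' * Real.exp (y c')) ≤ Real.exp (y c) / Real.exp 1) ∧
      ∀ μ ∈ spectrum ℂ (Matrix.of fun c c' : C => (ρ c c' : ℂ)),
        ‖μ‖ ≤ (Real.exp 1)⁻¹ := by
  have hx : ∀ c, 0 < Real.exp (y c) := fun c => Real.exp_pos _
  have hkey : ∀ c, (∑ c', ρ c c' * Real.exp (y c')) ≤ Real.exp (y c) / Real.exp 1 := by
    intro c
    rw [← hy c]
    calc y c = y c - 1 + 1 := by ring
      _ ≤ Real.exp (y c - 1) := Real.add_one_le_exp _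
      _ = Real.exp (y c) / Real.exp 1 := Real.exp_sub _ _
  refine ⟨hx, hkey, ?_⟩
  intro μ hμ
  set A : Matrix C C ℂ := Matrix.of fun c c' : C => (ρ c c' : ℂ) with hA
  -- convert spectrum membership to eigenvalue
  have hspec : μ ∈ spectrum ℂ (Matrix.toLinAlgEquiv' A) := by
    rwa [AlgEquiv.spectrum_eq]
  have hev : Module.End.HasEigenvalue (Matrix.toLinAlgEquiv' A) μ :=
    (Module.End.hasEigenvalue_iff_mem_spectrum).mpr hspec
  obtain ⟨v, hv⟩ := hev.exists_hasEigenvector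
  have hvne : v ≠ 0 := hv.right
  have hmul : A.mulVec v = μ • v := by
    have := hv.apply_eq_smul
    rw [Matrix.toLinAlgEquiv'_apply] at this
    exact this
  obtain ⟨c₁, hc₁⟩ : ∃ c, v c ≠ 0 := by
    by_contra h
    push_neg at h
    exact hvne (funext h)
  have : Nonempty C := ⟨c₁⟩
  set x : C → ℝ := fun c => Real.exp (y c) with hxdef
  -- maximize ratio
  obtain ⟨c₀, -, hmax⟩ := Finset.exists_max_image Finset.univ
    (fun c => ‖v c‖ / x c) ⟨c₁, Finset.mem_univ c₁⟩
  set M := ‖v c₀‖ / x c₀ with hM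
  have hMpos : 0 < M := by
    have h1 : ‖v c₁‖ / x c₁ ≤ M := hmax c₁ (Finset.mem_univ c₁)
    have : 0 < ‖v c₁‖ / x c₁ :=
      div_pos (by simpa using hc₁) (hx c₁)
    linarith
  have hbound : ∀ c, ‖v c‖ ≤ M * x c := by
    intro c
    have := hmax c (Finset.mem_univ c)
    calc ‖v c‖ = (‖v c‖ / x c) * x c := by
          exact (div_mul_cancel₀ _ (hx c).ne').symm
      _ ≤ M * x c := by
          exact mul_le_mul_of_nonneg_right this (hx c).le
  -- main estimate at c₀
  have hvc₀ : ‖v c₀‖ = M * x c₀ := by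
    rw [hM]; exact (div_mul_cancel₀ _ (hx c₀).ne').symm
  have key : ‖μ‖ * (M * x c₀) ≤ M * x c₀ / Real.exp 1 := by
    have h1 : ‖μ * v c₀‖ = ‖μ‖ * (M * x c₀) := by
      rw [norm_mul, hvc₀]
    have h2 : μ * v c₀ = ∑ c', (ρ c₀ c' : ℂ) * v c' := by
      have := congrFun hmul c₀
      simp only [Matrix.mulVec, dotProduct, Pi.smul_apply, smul_eq_mul] at this
      rw [← this]
      rfl
    calc ‖μ‖ * (M * x c₀) = ‖∑ c', (ρ c₀ c' : ℂ) * v c'‖ := by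
          rw [← h2, h1]
      _ ≤ ∑ c', ‖(ρ c₀ c' : ℂ) * v c'‖ := norm_sum_le _ _
      _ = ∑ c', ρ c₀ c' * ‖v c'‖ := by
          refine Finset.sum_congr rfl fun c' _ => ?_
          rw [norm_mul, Complex.norm_real, Real.norm_eq_abs, abs_of_nonneg (hρ c₀ c')]
      _ ≤ ∑ c', ρ c₀ c' * (M * x c') := by
          refine Finset.sum_le_sum fun c' _ => ?_
          exact mul_le_mul_of_nonneg_left (hbound c') (hρ c₀ c')
      _ = M * ∑ c', ρ c₀ c' * x c' := by
          rw [Finset.mul_sum]; exact Finset.sum_congr rfl fun c' _ => by ring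
      _ ≤ M * (x c₀ / Real.exp 1) := by
          exact mul_le_mul_of_nonneg_left (hkey c₀) hMpos.le
      _ = M * x c₀ / Real.exp 1 := by ring
  have hpos : 0 < M * x c₀ := mul_pos hMpos (hx c₀)
  rw [div_eq_mul_inv] at key
  have := (mul_le_mul_iff_of_pos_right hpos).mp (by linarith [key] : ‖μ‖ * (M * x c₀) ≤ (Real.exp 1)⁻¹ * (M * x c₀))
  linarith
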